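/- arXiv:2305.05565 — 3 statements merged into one kernel-verified Lean document; each statement's English description precedes it below -/
import Mathlib

section
/- In the asymptotic Bernoulli setting, let X_1, …, X_n be i.i.d. Binomial(m,p). Then there exist constants c > 0 and c̃ > 0, independent of n, such that for all sufficiently large n, P( max_{i∈[n]} X_i ≥ c·E[ max_{i∈[n]} X_i ] ) ≤ n^{−c̃}. -/
open Classical Finset

/-- Probability weight of `n` independent rows of `m` i.i.d. Bernoulli(p) trials;
row `i` realizes the Binomial(m,p) variable `X i`. -/
noncomputable def bWeight (n m : ℕ) (p : ℝ) (ω : Fin n → Fin m → Bool) : ℝ :=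
  ∏ i : Fin n, ∏ j : Fin m, if ω i j then p else 1 - p

/-- Probability of an event for `n` i.i.d. Binomial(m,p) variables. -/
noncomputable def bProb (n m : ℕ) (p : ℝ) (P : (Fin n → Fin m → Bool) → Prop) : ℝ :=
  ∑ ω : Fin n → Fin m → Bool, if P ω then bWeight n m p ω else 0

/-- `X i`: the `i`-th Binomial(m,p) variable (number of successes in row `i`). -/
def Xvar {n m : ℕ} (ω : Fin n → Fin m → Bool) (i : Fin n) : ℕ :=
  (Finset.univ.filter fun j : Fin m => ω i j = true).card

/-- `max_{i ∈ [n]} X_i`. -/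
def maxX {n m : ℕ} (ω : Fin n → Fin m → Bool) : ℕ :=
  Finset.univ.sup (Xvar ω)

/-- `E[max_{i ∈ [n]} X_i]` for `n` i.i.d. Binomial(m,p) variables. -/
noncomputable def expMax (n m : ℕ) (p : ℝ) : ℝ :=
  ∑ ω : Fin n → Fin m → Bool, bWeight n m p ω * (maxX ω : ℝ)

namespace S11

noncomputable def W (p : ℝ) {α : Type} [Fintype α] (a : α → Bool) : ℝ :=
  ∏ j, if a j then p else 1 - p

noncomputable def Pr (p : ℝ) {α : Type} [Fintype α] (A : (α → Bool) → Prop) : ℝ :=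
  ∑ a : α → Bool, if A a then W p a else 0

variable {p : ℝ} {α : Type} [Fintype α]

lemma W_nonneg (hp0 : 0 ≤ p) (hp1 : p ≤ 1) (a : α → Bool) : 0 ≤ W p a :=
  Finset.prod_nonneg fun j _ => by by_cases h : a j <;> simp [h] <;> linarith

lemma mass : (∑ a : α → Bool, W p a) = 1 := by
  classical
  have h := Finset.prod_univ_sum (fun _ : α => (univ : Finset Bool))
      (fun _ b => if b then p else 1 - p)
  rw [Fintype.piFinset_univ] at h
  have h2 : (∑ b : Bool, if b then p else 1 - p) = 1 := by
    rw [Fintype.sum_bool]; norm_num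
  calc ∑ a : α → Bool, W p a
      = ∏ _i : α, ∑ b : Bool, (if b then p else 1 - p) := by rw [h]; rfl
    _ = 1 := by rw [Finset.prod_congr rfl fun i _ => h2, Finset.prod_const_one]

lemma Pr_nonneg (hp0 : 0 ≤ p) (hp1 : p ≤ 1) (A : (α → Bool) → Prop) : 0 ≤ Pr p A :=
  Finset.sum_nonneg fun a _ => by
    by_cases h : A a <;> simp [h, W_nonneg hp0 hp1]

lemma Pr_le_one (hp0 : 0 ≤ p) (hp1 : p ≤ 1) (A : (α → Bool) → Prop) : Pr p A ≤ 1 := by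
  have : Pr p A ≤ ∑ a : α → Bool, W p a := by
    apply Finset.sum_le_sum
    intro a _
    by_cases h : A a <;> simp [h, W_nonneg hp0 hp1]
  simpa [mass] using this

lemma Pr_mono (hp0 : 0 ≤ p) (hp1 : p ≤ 1) {A B : (α → Bool) → Prop}
    (h : ∀ a, A a → B a) : Pr p A ≤ Pr p B := by
  apply Finset.sum_le_sum
  intro a _
  by_cases hA : A a
  · rw [if_pos hA, if_pos (h a hA)]
  · rw [if_neg hA]
    by_cases hB : B a <;> simp [hB, W_nonneg hp0 hp1]

lemma Pr_congr {A B : (α → Bool) → Prop} (h : ∀ a, A a ↔ B a) : Pr p A = Pr p B :=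
  Finset.sum_congr rfl fun a _ => by by_cases hA : A a <;> simp [hA, (h a).symm, h a]

lemma Pr_compl (A : (α → Bool) → Prop) : Pr p (fun a => ¬ A a) = 1 - Pr p A := by
  have hadd : Pr p (fun a => ¬ A a) + Pr p A = ∑ a : α → Bool, W p a := by
    rw [Pr, Pr, ← Finset.sum_add_distrib]
    apply Finset.sum_congr rfl
    intro a _
    by_cases h : A a <;> simp [h]
  have hm : (∑ a : α → Bool, W p a) = 1 := mass
  linarith [hadd, hm]

lemma Pr_sum_comm {ι : Type*} [Fintype ι] (E : ι → (α → Bool) → Prop) :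
    (∑ i, Pr p (E i)) = ∑ a : α → Bool, ∑ i, (if E i a then W p a else 0) :=
  Finset.sum_comm

lemma sum_restrict_split (P : α → Prop) [DecidablePred P]
    (g : ({k // P k} → Bool) → ℝ) (h : ({k // ¬ P k} → Bool) → ℝ) :
    (∑ a : α → Bool, g (fun k => a k.1) * h (fun k => a k.1))
      = (∑ u, g u) * (∑ v, h v) := by
  calc (∑ a : α → Bool, g (fun k => a k.1) * h (fun k => a k.1))
      = ∑ x : ({k // P k} → Bool) × ({k // ¬ P k} → Bool), g x.1 * h x.2 :=
        Fintype.sum_equiv (Equiv.piEquivPiSubtypeProd P (fun _ => Bool)) _ _ (fun a => rfl)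
    _ = ∑ u, ∑ v, g u * h v := Fintype.sum_prod_type _
    _ = (∑ u, g u) * (∑ v, h v) := (Finset.sum_mul_sum _ _ _ _).symm

lemma Pr_split (hp0 : 0 ≤ p) (hp1 : p ≤ 1) (P : α → Prop) [DecidablePred P]
    (A B : (α → Bool) → Prop)
    (hA : ∀ a b, (∀ k, P k → a k = b k) → A a → A b)
    (hB : ∀ a b, (∀ k, ¬ P k → a k = b k) → B a → B b) :
    Pr p (fun a => A a ∧ B a) = Pr p A * Pr p B := by
  classical
  set extA : ({k // P k} → Bool) → (α → Bool) :=
    fun u k => if hk : P k then u ⟨k, hk⟩ else false with hextA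
  set extB : ({k // ¬ P k} → Bool) → (α → Bool) :=
    fun v k => if hk : ¬ P k then v ⟨k, hk⟩ else false with hextB
  have hAiff : ∀ a : α → Bool, A a ↔ A (extA (fun k => a k.1)) := by
    intro a
    have hag : ∀ k, P k → a k = extA (fun k => a k.1) k := by
      intro k hk; simp [hextA, hk]
    exact ⟨hA _ _ hag, hA _ _ (fun k hk => (hag k hk).symm)⟩
  have hBiff : ∀ a : α → Bool, B a ↔ B (extB (fun k => a k.1)) := by
    intro a
    have hag : ∀ k, ¬ P k → a k = extB (fun k => a k.1) k := by
      intro k hk; simp [hextB, hk]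
    exact ⟨hB _ _ hag, hB _ _ (fun k hk => (hag k hk).symm)⟩
  set g : ({k // P k} → Bool) → ℝ :=
    fun u => (if A (extA u) then 1 else 0) * ∏ k : {x // P x}, (if u k then p else 1 - p) with hg
  set h : ({k // ¬ P k} → Bool) → ℝ :=
    fun v => (if B (extB v) then 1 else 0) * ∏ k : {x // ¬ P x}, (if v k then p else 1 - p) with hh
  have hW : ∀ a : α → Bool, W p a
      = (∏ k : {x // P x}, (if a k.1 then p else 1 - p))
        * ∏ k : {x // ¬ P x}, (if a k.1 then p else 1 - p) := by
    intro a
    rw [show W p a = ∏ k : α, (if a k then p else 1 - p) from rfl,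
      ← Fintype.prod_subtype_mul_prod_subtype P (fun k => if a k then p else 1 - p)]
  have g_eq : ∀ a : α → Bool, g (fun k => a k.1)
      = (if A a then 1 else 0) * ∏ k : {x // P x}, (if a k.1 then p else 1 - p) := by
    intro a
    simp only [hg]
    rw [if_congr (hAiff a).symm rfl rfl]
  have h_eq : ∀ a : α → Bool, h (fun k => a k.1)
      = (if B a then 1 else 0) * ∏ k : {x // ¬ P x}, (if a k.1 then p else 1 - p) := by
    intro a
    simp only [hh]
    rw [if_congr (hBiff a).symm rfl rfl]
  have e1 : Pr p (fun a => A a ∧ B a) = (∑ u, g u) * (∑ v, h v) := by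
    rw [← sum_restrict_split P g h]
    apply Finset.sum_congr rfl
    intro a _
    rw [g_eq a, h_eq a]
    by_cases hAa : A a <;> by_cases hBa : B a <;> simp [hAa, hBa, hW a]
  have e2 : Pr p A = (∑ u, g u) := by
    have step : Pr p A = (∑ u, g u) * (∑ v : {x // ¬ P x} → Bool, W p v) := by
      rw [← sum_restrict_split P g (fun v => W p v)]
      apply Finset.sum_congr rfl
      intro a _
      rw [g_eq a]
      by_cases hAa : A a
      · simp only [if_pos hAa, one_mul]
        exact hW a
      · simp [if_neg hAa]
    have hm : (∑ v : {x // ¬ P x} → Bool, W p v) = 1 := by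
      have h0 := mass (p := p) (α := {x // ¬ P x})
      convert h0 using 2
      exact congrArg (fun (i : Fintype _) => @Finset.univ _ i) (Subsingleton.elim _ _)
    rw [step, hm, mul_one]
  have e3 : Pr p B = (∑ v, h v) := by
    have step : Pr p B = (∑ u : {x // P x} → Bool, W p u) * (∑ v, h v) := by
      rw [← sum_restrict_split P (fun u => W p u) h]
      apply Finset.sum_congr rfl
      intro a _
      rw [h_eq a]
      by_cases hBa : B a
      · simp only [if_pos hBa, one_mul]
        exact hW a
      · simp [if_neg hBa]
    have hm : (∑ u : {x // P x} → Bool, W p u) = 1 := by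
      have h0 := mass (p := p) (α := {x // P x})
      convert h0 using 2
      exact congrArg (fun (i : Fintype _) => @Finset.univ _ i) (Subsingleton.elim _ _)
    rw [step, hm, one_mul]
  rw [e1, e2, e3]

def cnt {m : ℕ} (a : Fin m → Bool) : ℕ := (univ.filter fun j => a j = true).card

noncomputable def q (p : ℝ) (m : ℕ) (t : ℕ) : ℝ := Pr p (fun a : Fin m → Bool => t ≤ cnt a)

lemma rank_exists {β : Type*} [LinearOrder β] [DecidableEq β] :
    ∀ (s t : ℕ) (S : Finset β), s + 1 + t ≤ S.card →
      ∃ j ∈ S, (S.filter fun k => k < j).card = s ∧ t ≤ (S.filter fun k => j < k).card := by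
  intro s
  induction s with
  | zero =>
    intro t S hS
    have hne : S.Nonempty := Finset.card_pos.mp (by omega)
    refine ⟨S.min' hne, S.min'_mem hne, ?_, ?_⟩
    · rw [Finset.card_eq_zero, Finset.filter_eq_empty_iff]
      intro k hk
      exact not_lt.mpr (S.min'_le k hk)
    · have he : S.filter (fun k => S.min' hne < k) = S.erase (S.min' hne) := by
        ext k
        simp only [Finset.mem_filter, Finset.mem_erase]
        constructor
        · rintro ⟨hk, hlt⟩; exact ⟨ne_of_gt hlt, hk⟩
        · rintro ⟨hne', hk⟩; exact ⟨hk, lt_of_le_of_ne (S.min'_le k hk) (Ne.symm hne')⟩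
      rw [he, Finset.card_erase_of_mem (S.min'_mem hne)]
      omega
  | succ s ih =>
    intro t S hS
    obtain ⟨j, hjS, hcard, hge⟩ := ih (t + 1) S (by omega)
    have hne : (S.filter fun k => j < k).Nonempty := Finset.card_pos.mp (by omega)
    set j' := (S.filter fun k => j < k).min' hne with hj'def
    have hj'mem' := (S.filter fun k => j < k).min'_mem hne
    rw [Finset.mem_filter] at hj'mem'
    refine ⟨j', hj'mem'.1, ?_, ?_⟩
    · have he : S.filter (fun k => k < j') = insert j (S.filter fun k => k < j) := by
        ext k
        simp only [Finset.mem_filter, Finset.mem_insert]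
        constructor
        · rintro ⟨hkS, hk⟩
          rcases lt_trichotomy k j with h | h | h
          · right; exact ⟨hkS, h⟩
          · left; exact h
          · exfalso
            have hle : j' ≤ k := Finset.min'_le _ k (Finset.mem_filter.mpr ⟨hkS, h⟩)
            exact absurd hk (not_lt.mpr hle)
        · rintro (rfl | ⟨hkS, hk⟩)
          · exact ⟨hjS, hj'mem'.2⟩
          · exact ⟨hkS, lt_trans hk hj'mem'.2⟩
      rw [he, Finset.card_insert_of_notMem (by simp), hcard]
    · have he : S.filter (fun k => j' < k) = (S.filter fun k => j < k).erase j' := by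
        ext k
        simp only [Finset.mem_filter, Finset.mem_erase]
        constructor
        · rintro ⟨hkS, hk⟩
          exact ⟨(ne_of_lt hk).symm, hkS, lt_trans hj'mem'.2 hk⟩
        · rintro ⟨hne', hkS, hk⟩
          exact ⟨hkS, lt_of_le_of_ne (Finset.min'_le _ k (Finset.mem_filter.mpr ⟨hkS, hk⟩)) (Ne.symm hne')⟩
      rw [he, Finset.card_erase_of_mem (by rw [Finset.mem_filter]; exact hj'mem')]
      omega

lemma sum_Pr_le {ι : Type*} [Fintype ι] (hp0 : 0 ≤ p) (hp1 : p ≤ 1)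
    (E : ι → (α → Bool) → Prop) (C : (α → Bool) → Prop)
    (hsub : ∀ i a, E i a → C a)
    (hdisj : ∀ i i' a, E i a → E i' a → i = i') :
    (∑ i, Pr p (E i)) ≤ Pr p C := by
  rw [Pr_sum_comm E]
  apply Finset.sum_le_sum
  intro a _
  by_cases h : ∃ i, E i a
  · obtain ⟨i0, hi0⟩ := h
    rw [Finset.sum_eq_single i0]
    · rw [if_pos hi0, if_pos (hsub i0 a hi0)]
    · intro i _ hne
      exact if_neg (fun hE => hne (hdisj i i0 a hE hi0))
    · intro habs; exact absurd (Finset.mem_univ i0) habs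
  · push_neg at h
    have hz : (∑ i, if E i a then W p a else 0) = 0 :=
      Finset.sum_eq_zero (fun i _ => if_neg (h i))
    rw [hz]
    by_cases hC : C a <;> simp [hC, W_nonneg hp0 hp1]

lemma q_submult {m : ℕ} (hp0 : 0 ≤ p) (hp1 : p ≤ 1) (s t : ℕ) :
    q p m (s + 1 + t) ≤ q p m (s + 1) * q p m t := by
  classical
  set E : Fin m → (Fin m → Bool) → Prop := fun j a =>
    a j = true ∧ ((univ.filter fun k => a k = true).filter fun k => k < j).card = s with hE
  set F : Fin m → (Fin m → Bool) → Prop := fun j a =>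
    t ≤ ((univ.filter fun k => a k = true).filter fun k => j < k).card with hF
  have wnn : ∀ a : Fin m → Bool, 0 ≤ W p a := W_nonneg hp0 hp1
  have step1 : q p m (s + 1 + t) ≤ ∑ j : Fin m, Pr p (fun a => E j a ∧ F j a) := by
    rw [Pr_sum_comm (fun j a => E j a ∧ F j a)]
    apply Finset.sum_le_sum
    intro a _
    by_cases h : s + 1 + t ≤ cnt a
    · rw [if_pos h]
      obtain ⟨j, hjS, hc1, hc2⟩ := rank_exists s t (univ.filter fun k => a k = true) h
      have hEFj : E j a ∧ F j a := ⟨⟨(Finset.mem_filter.mp hjS).2, hc1⟩, hc2⟩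
      refine le_trans ?_
        (Finset.sum_le_sum_of_subset_of_nonneg (Finset.subset_univ {j}) ?_)
      · rw [Finset.sum_singleton, if_pos hEFj]
      · intro i _ _
        by_cases hi : E i a ∧ F i a
        · rw [if_pos hi]; exact wnn a
        · rw [if_neg hi]
    · rw [if_neg h]
      refine Finset.sum_nonneg ?_
      intro i _
      by_cases hi : E i a ∧ F i a
      · rw [if_pos hi]; exact wnn a
      · rw [if_neg hi]
  have step2 : ∀ j : Fin m, Pr p (fun a => E j a ∧ F j a) = Pr p (E j) * Pr p (F j) := by
    intro j
    apply Pr_split hp0 hp1 (fun k => k ≤ j)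
    · intro a b hag hEa
      obtain ⟨h1, h2⟩ := hEa
      constructor
      · rw [← hag j le_rfl]; exact h1
      · rw [← h2]
        congr 1
        ext k
        simp only [Finset.mem_filter, Finset.mem_univ, true_and]
        constructor
        · rintro ⟨hk, hlt⟩; exact ⟨by rw [hag k (le_of_lt hlt)]; exact hk, hlt⟩
        · rintro ⟨hk, hlt⟩; exact ⟨by rw [← hag k (le_of_lt hlt)]; exact hk, hlt⟩
    · intro a b hag hFa
      simp only [hF] at hFa ⊢
      have hsets : ((univ.filter fun k => b k = true).filter fun k => j < k)
          = ((univ.filter fun k => a k = true).filter fun k => j < k) := by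
        ext k
        simp only [Finset.mem_filter, Finset.mem_univ, true_and]
        constructor
        · rintro ⟨hk, hlt⟩; exact ⟨by rw [hag k (not_le.mpr hlt)]; exact hk, hlt⟩
        · rintro ⟨hk, hlt⟩; exact ⟨by rw [← hag k (not_le.mpr hlt)]; exact hk, hlt⟩
      rw [hsets]
      exact hFa
  have step3 : ∀ j : Fin m, Pr p (F j) ≤ q p m t := by
    intro j
    apply Pr_mono hp0 hp1
    intro a hFa
    exact le_trans hFa (Finset.card_le_card (Finset.filter_subset _ _))
  have step4 : (∑ j : Fin m, Pr p (E j)) ≤ q p m (s + 1) := by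
    apply sum_Pr_le hp0 hp1
    · intro j a hEa
      obtain ⟨h1, h2⟩ := hEa
      have hsub : insert j ((univ.filter fun k => a k = true).filter fun k => k < j)
          ⊆ univ.filter fun k => a k = true := by
        intro k hk
        rcases Finset.mem_insert.mp hk with rfl | hk'
        · exact Finset.mem_filter.mpr ⟨Finset.mem_univ _, h1⟩
        · exact Finset.mem_of_mem_filter _ hk'
      have hcard := Finset.card_le_card hsub
      rw [Finset.card_insert_of_notMem (by simp), h2] at hcard
      exact hcard
    · intro j j' a hEj hEj'
      by_contra hne
      have key : ∀ u v : Fin m, u < v → E u a → E v a → False := by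
        intro u v huv hEu hEv
        obtain ⟨h1, h2⟩ := hEu
        obtain ⟨h1', h2'⟩ := hEv
        have hsub : insert u ((univ.filter fun k => a k = true).filter fun k => k < u)
            ⊆ (univ.filter fun k => a k = true).filter fun k => k < v := by
          intro k hk
          rcases Finset.mem_insert.mp hk with rfl | hk'
          · exact Finset.mem_filter.mpr ⟨Finset.mem_filter.mpr ⟨Finset.mem_univ _, h1⟩, huv⟩
          · obtain ⟨hk1, hk2⟩ := Finset.mem_filter.mp hk'
            exact Finset.mem_filter.mpr ⟨hk1, lt_trans hk2 huv⟩
        have hcc := Finset.card_le_card hsub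
        rw [Finset.card_insert_of_notMem (by simp), h2, h2'] at hcc
        omega
      rcases lt_or_gt_of_ne hne with hlt | hlt
      · exact key j j' hlt hEj hEj'
      · exact key j' j hlt hEj' hEj
  calc q p m (s + 1 + t) ≤ ∑ j : Fin m, Pr p (fun a => E j a ∧ F j a) := step1
    _ = ∑ j : Fin m, Pr p (E j) * Pr p (F j) := Finset.sum_congr rfl (fun j _ => step2 j)
    _ ≤ ∑ j : Fin m, Pr p (E j) * q p m t :=
        Finset.sum_le_sum (fun j _ => mul_le_mul_of_nonneg_left (step3 j) (Pr_nonneg hp0 hp1 _))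
    _ = (∑ j : Fin m, Pr p (E j)) * q p m t := (Finset.sum_mul _ _ _).symm
    _ ≤ q p m (s + 1) * q p m t :=
        mul_le_mul_of_nonneg_right step4 (Pr_nonneg hp0 hp1 _)

lemma sum_univ_congr {β M : Type*} [AddCommMonoid M] (i1 i2 : Fintype β) (f : β → M) :
    @Finset.sum β M _ (@Finset.univ β i1) f = @Finset.sum β M _ (@Finset.univ β i2) f :=
  congrArg (fun i : Fintype β => @Finset.sum β M _ (@Finset.univ β i) f) (Subsingleton.elim i1 i2)

lemma sum_prod_pi {n m : ℕ} (f : Fin n → (Fin m → Bool) → ℝ) :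
    (∑ ω : Fin n → Fin m → Bool, ∏ i, f i (ω i)) = ∏ i, ∑ a : Fin m → Bool, f i a := by
  have hps := Finset.prod_univ_sum (fun _ : Fin n => (univ : Finset (Fin m → Bool))) f
  rw [Fintype.piFinset_univ] at hps
  exact (sum_univ_congr _ _ _).trans hps.symm

lemma massFin {m : ℕ} : (∑ a : Fin m → Bool, W p a) = 1 := by
  have h0 := mass (p := p) (α := Fin m)
  convert h0 using 2
  exact congrArg (fun (i : Fintype _) => @Finset.univ _ i) (Subsingleton.elim _ _)

lemma PrFin {m : ℕ} (A : (Fin m → Bool) → Prop) :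
    (∑ a : Fin m → Bool, if A a then W p a else 0) = Pr p A :=
  sum_univ_congr _ _ _

lemma bWeight_nonneg {n m : ℕ} (hp0 : 0 ≤ p) (hp1 : p ≤ 1) (ω : Fin n → Fin m → Bool) :
    0 ≤ bWeight n m p ω :=
  Finset.prod_nonneg fun i _ => W_nonneg hp0 hp1 (ω i)

lemma bProb_nonneg {n m : ℕ} (hp0 : 0 ≤ p) (hp1 : p ≤ 1)
    (P : (Fin n → Fin m → Bool) → Prop) : 0 ≤ bProb n m p P :=
  Finset.sum_nonneg fun ω _ => by
    by_cases h : P ω <;> simp [h, bWeight_nonneg hp0 hp1]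

lemma bProb_mono {n m : ℕ} (hp0 : 0 ≤ p) (hp1 : p ≤ 1)
    {P Q : (Fin n → Fin m → Bool) → Prop} (h : ∀ ω, P ω → Q ω) :
    bProb n m p P ≤ bProb n m p Q := by
  apply Finset.sum_le_sum
  intro ω _
  by_cases hP : P ω
  · rw [if_pos hP, if_pos (h ω hP)]
  · rw [if_neg hP]
    by_cases hQ : Q ω <;> simp [hQ, bWeight_nonneg hp0 hp1]

lemma bProb_congr {n m : ℕ} {P Q : (Fin n → Fin m → Bool) → Prop}
    (h : ∀ ω, P ω ↔ Q ω) : bProb n m p P = bProb n m p Q :=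
  Finset.sum_congr rfl fun ω _ => by by_cases hP : P ω <;> simp [hP, (h ω).symm, h ω]

lemma bMass {n m : ℕ} : (∑ ω : Fin n → Fin m → Bool, bWeight n m p ω) = 1 := by
  calc (∑ ω : Fin n → Fin m → Bool, bWeight n m p ω)
      = ∏ _i : Fin n, ∑ a : Fin m → Bool, W p a := sum_prod_pi (fun _ a => W p a)
    _ = 1 := by
        rw [Finset.prod_congr rfl (fun (i : Fin n) _ => (massFin : (∑ a : Fin m → Bool, W p a) = 1)),
          Finset.prod_const_one]

lemma bProb_compl {n m : ℕ} (P : (Fin n → Fin m → Bool) → Prop) :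
    bProb n m p (fun ω => ¬ P ω) = 1 - bProb n m p P := by
  have hadd : bProb n m p (fun ω => ¬ P ω) + bProb n m p P
      = ∑ ω : Fin n → Fin m → Bool, bWeight n m p ω := by
    rw [bProb, bProb, ← Finset.sum_add_distrib]
    apply Finset.sum_congr rfl
    intro ω _
    by_cases h : P ω <;> simp [h]
  have hm : (∑ ω : Fin n → Fin m → Bool, bWeight n m p ω) = 1 := bMass
  linarith [hadd, hm]

lemma bProb_all {n m : ℕ} (A : (Fin m → Bool) → Prop) :
    bProb n m p (fun ω => ∀ i, A (ω i)) = (Pr p A) ^ n := by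
  have step1 : bProb n m p (fun ω => ∀ i, A (ω i))
      = ∑ ω : Fin n → Fin m → Bool, ∏ i, (if A (ω i) then W p (ω i) else 0) := by
    rw [bProb]
    apply Finset.sum_congr rfl
    intro ω _
    by_cases h : ∀ i, A (ω i)
    · rw [if_pos h]
      exact Finset.prod_congr rfl fun i _ => (if_pos (h i)).symm
    · rw [if_neg h]
      push_neg at h
      obtain ⟨i, hi⟩ := h
      refine (Finset.prod_eq_zero (Finset.mem_univ i) ?_).symm
      exact if_neg hi
  rw [step1, sum_prod_pi (fun _ a => if A a then W p a else 0),
    Finset.prod_congr rfl (fun (i : Fin n) _ => (PrFin A)), Finset.prod_const,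
    Finset.card_univ, Fintype.card_fin]

lemma bProb_single {n m : ℕ} (i₀ : Fin n) (A : (Fin m → Bool) → Prop) :
    bProb n m p (fun ω => A (ω i₀)) = Pr p A := by
  have step1 : bProb n m p (fun ω => A (ω i₀))
      = ∑ ω : Fin n → Fin m → Bool,
          ∏ i, (if i = i₀ then (if A (ω i) then W p (ω i) else 0) else W p (ω i)) := by
    rw [bProb]
    apply Finset.sum_congr rfl
    intro ω _
    by_cases h : A (ω i₀)
    · rw [if_pos h]
      apply Finset.prod_congr rfl
      intro i _
      by_cases hi : i = i₀
      · subst hi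
        rw [if_pos rfl, if_pos h]
        rfl
      · rw [if_neg hi]
        rfl
    · rw [if_neg h]
      refine (Finset.prod_eq_zero (Finset.mem_univ i₀) ?_).symm
      rw [if_pos rfl]
      exact if_neg h
  rw [step1, sum_prod_pi (fun i a => if i = i₀ then (if A a then W p a else 0) else W p a)]
  have hterm : ∀ i : Fin n,
      (∑ a : Fin m → Bool, (if i = i₀ then (if A a then W p a else 0) else W p a))
        = if i = i₀ then Pr p A else 1 := by
    intro i
    by_cases hi : i = i₀
    · simp only [if_pos hi]
      exact PrFin A
    · simp only [if_neg hi]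
      exact massFin
  rw [Finset.prod_congr rfl (fun i _ => hterm i),
    Finset.prod_ite_eq' univ i₀ (fun _ => Pr p A), if_pos (Finset.mem_univ i₀)]

lemma bProb_sum_comm {n m : ℕ} {ι : Type*} [Fintype ι]
    (Q : ι → (Fin n → Fin m → Bool) → Prop) :
    (∑ i, bProb n m p (Q i))
      = ∑ ω : Fin n → Fin m → Bool, ∑ i, (if Q i ω then bWeight n m p ω else 0) :=
  Finset.sum_comm

lemma bProb_union {n m : ℕ} (hp0 : 0 ≤ p) (hp1 : p ≤ 1) (A : (Fin m → Bool) → Prop) :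
    bProb n m p (fun ω => ∃ i, A (ω i)) ≤ (n : ℝ) * Pr p A := by
  have step : bProb n m p (fun ω => ∃ i, A (ω i))
      ≤ ∑ i : Fin n, bProb n m p (fun ω => A (ω i)) := by
    rw [bProb_sum_comm (fun i ω => A (ω i)), bProb]
    apply Finset.sum_le_sum
    intro ω _
    by_cases h : ∃ i, A (ω i)
    · rw [if_pos h]
      obtain ⟨i0, hi0⟩ := h
      refine le_trans ?_
        (Finset.sum_le_sum_of_subset_of_nonneg (Finset.subset_univ {i0}) ?_)
      · rw [Finset.sum_singleton, if_pos hi0]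
      · intro i _ _
        by_cases hi : A (ω i)
        · rw [if_pos hi]; exact bWeight_nonneg hp0 hp1 ω
        · rw [if_neg hi]
    · rw [if_neg h]
      refine Finset.sum_nonneg ?_
      intro i _
      by_cases hi : A (ω i)
      · rw [if_pos hi]; exact bWeight_nonneg hp0 hp1 ω
      · rw [if_neg hi]
  calc bProb n m p (fun ω => ∃ i, A (ω i))
      ≤ ∑ i : Fin n, bProb n m p (fun ω => A (ω i)) := step
    _ = ∑ _i : Fin n, Pr p A := Finset.sum_congr rfl fun i _ => bProb_single i A
    _ = (n : ℝ) * Pr p A := by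
        rw [Finset.sum_const, Finset.card_univ, Fintype.card_fin, nsmul_eq_mul]

lemma t_mul_prob_le_expMax {n m : ℕ} (hp0 : 0 ≤ p) (hp1 : p ≤ 1) (t : ℕ) :
    (t : ℝ) * bProb n m p (fun ω => t ≤ maxX ω) ≤ expMax n m p := by
  rw [bProb, Finset.mul_sum, expMax]
  apply Finset.sum_le_sum
  intro ω _
  by_cases h : t ≤ maxX ω
  · rw [if_pos h, mul_comm]
    exact mul_le_mul_of_nonneg_left (Nat.cast_le.mpr h) (bWeight_nonneg hp0 hp1 ω)
  · rw [if_neg h, mul_zero]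
    exact mul_nonneg (bWeight_nonneg hp0 hp1 ω) (Nat.cast_nonneg _)

lemma expMax_nonneg {n m : ℕ} (hp0 : 0 ≤ p) (hp1 : p ≤ 1) : 0 ≤ expMax n m p :=
  Finset.sum_nonneg fun ω _ =>
    mul_nonneg (bWeight_nonneg hp0 hp1 ω) (Nat.cast_nonneg _)

lemma maxX_tail_compl {n m : ℕ} (t : ℕ) (ht : 1 ≤ t) :
    bProb n m p (fun ω => t ≤ maxX ω) = 1 - (1 - q p m t) ^ n := by
  have hcompl : bProb n m p (fun ω => ¬ (t ≤ maxX ω)) = (1 - q p m t) ^ n := by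
    have hcongr : bProb n m p (fun ω => ¬ (t ≤ maxX ω))
        = bProb n m p (fun ω => ∀ i, ¬ (t ≤ cnt (ω i))) := by
      apply bProb_congr
      intro ω
      rw [not_le, show maxX ω = univ.sup (Xvar ω) from rfl,
        Finset.sup_lt_iff (show (⊥ : ℕ) < t from ht)]
      constructor
      · intro h i
        exact not_le.mpr (h i (Finset.mem_univ i))
      · intro h b _
        exact not_le.mp (h b)
    have hPc : Pr p (fun a : Fin m → Bool => ¬ (t ≤ cnt a)) = 1 - q p m t := Pr_compl _
    rw [hcongr, bProb_all (fun a => ¬ (t ≤ cnt a)), hPc]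
  have h2 : bProb n m p (fun ω => ¬ (t ≤ maxX ω))
      = 1 - bProb n m p (fun ω => t ≤ maxX ω) := bProb_compl _
  linarith [hcompl, h2]

lemma one_sub_q_one {m : ℕ} : 1 - q p m 1 = (1 - p) ^ m := by
  have h1 : Pr p (fun a : Fin m → Bool => ¬ (1 ≤ cnt a)) = (1 - p) ^ m := by
    have hcongr : Pr p (fun a : Fin m → Bool => ¬ (1 ≤ cnt a))
        = Pr p (fun a : Fin m → Bool => a = fun _ => false) := by
      apply Pr_congr
      intro a
      rw [not_le, Nat.lt_one_iff]
      constructor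
      · intro h
        funext j
        by_contra hcon
        have haj : a j = true := by
          cases hval : a j
          · exact absurd hval hcon
          · rfl
        have hmem : j ∈ univ.filter (fun j => a j = true) :=
          Finset.mem_filter.mpr ⟨Finset.mem_univ _, haj⟩
        have hemp := Finset.card_eq_zero.mp (h : cnt a = 0)
        rw [hemp] at hmem
        exact absurd hmem (Finset.notMem_empty j)
      · rintro rfl
        simp [cnt]
    rw [hcongr]
    have hsum : Pr p (fun a : Fin m → Bool => a = fun _ => false)
        = W p (fun _ : Fin m => false) := by
      rw [Pr]
      refine (Finset.sum_eq_single (fun _ : Fin m => false) ?_ ?_).trans ?_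
      · intro b _ hb
        exact if_neg hb
      · intro habs
        simp at habs
      · exact if_pos rfl
    rw [hsum]
    have : W p (fun _ : Fin m => false) = ∏ _j : Fin m, (1 - p) :=
      Finset.prod_congr rfl (fun j _ => if_neg (by simp))
    rw [this, Finset.prod_const, Finset.card_univ, Fintype.card_fin]
  have hc : Pr p (fun a : Fin m → Bool => ¬ (1 ≤ cnt a)) = 1 - q p m 1 :=
    Pr_compl _
  linarith [h1, hc]

lemma main_bound {n m : ℕ} (hp0 : 0 < p) (hp2 : p ≤ 1/2) (hn : 1 ≤ n)
    (hmnp : 1 ≤ p * ((m : ℝ) * (n : ℝ))) :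
    bProb n m p (fun ω => 12 * expMax n m p ≤ (maxX ω : ℝ)) ≤ (n : ℝ) ^ (-(2:ℝ)) := by
  have hp0' : 0 ≤ p := hp0.le
  have hp1 : p ≤ 1 := by linarith
  have hq0 : ∀ t, 0 ≤ q p m t := fun t => Pr_nonneg hp0' hp1 _
  have hq1 : ∀ t, q p m t ≤ 1 := fun t => Pr_le_one hp0' hp1 _
  have hexp_half : Real.exp (-1) ≤ 1/2 := by
    have h2e : (2:ℝ) ≤ Real.exp 1 := by
      have := Real.add_one_le_exp 1; linarith
    have hmul : Real.exp (-1) * Real.exp 1 = 1 := by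
      rw [← Real.exp_add]; norm_num
    nlinarith [mul_nonneg (Real.exp_pos (-1)).le (by linarith : (0:ℝ) ≤ Real.exp 1 - 2)]
  have hpow_half : ∀ (x : ℝ) (k : ℕ), 0 ≤ x → x ≤ 1 → 1 ≤ (k:ℝ) * x → (1 - x)^k ≤ 1/2 := by
    intro x k hx0 hx1 hkx
    have h1 : (1 - x) ≤ Real.exp (-x) := by
      have := Real.add_one_le_exp (-x); linarith
    have h2 : (1-x)^k ≤ (Real.exp (-x))^k := pow_le_pow_left₀ (by linarith) h1 k
    have h3 : (Real.exp (-x))^k = Real.exp ((k:ℝ) * (-x)) := (Real.exp_nat_mul _ k).symm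
    have h4 : Real.exp ((k:ℝ) * (-x)) ≤ Real.exp (-1) := by
      apply Real.exp_le_exp.mpr
      nlinarith
    calc (1-x)^k ≤ (Real.exp (-x))^k := h2
      _ = Real.exp ((k:ℝ)*(-x)) := h3
      _ ≤ Real.exp (-1) := h4
      _ ≤ 1/2 := hexp_half
  set M := expMax n m p with hMdef
  have hM0 : 0 ≤ M := expMax_nonneg hp0' hp1
  have hMhalf : 1/2 ≤ M := by
    have htail := maxX_tail_compl (p := p) (n := n) (m := m) 1 le_rfl
    have hq1e : 1 - q p m 1 = (1-p)^m := one_sub_q_one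
    have hbound : ((1-p)^m)^n ≤ 1/2 := by
      rw [← pow_mul]
      apply hpow_half p (m*n) hp0' hp1
      push_cast
      calc (1:ℝ) ≤ p * ((m:ℝ)*(n:ℝ)) := hmnp
        _ = (m:ℝ)*(n:ℝ)*p := by ring
    have hprob : 1/2 ≤ bProb n m p (fun ω => 1 ≤ maxX ω) := by
      rw [htail, hq1e]
      linarith [hbound]
    have hle := t_mul_prob_le_expMax (p := p) (n := n) (m := m) hp0' hp1 1
    rw [Nat.cast_one, one_mul] at hle
    linarith
  have lower : ∀ t : ℕ, 1 ≤ t → 1 ≤ (n:ℝ) * q p m t → (t:ℝ) ≤ 2 * M := by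
    intro t ht hnq
    have htail := maxX_tail_compl (p := p) (n := n) (m := m) t ht
    have hb : (1 - q p m t)^n ≤ 1/2 := hpow_half (q p m t) n (hq0 t) (hq1 t) hnq
    have hprob : 1/2 ≤ bProb n m p (fun ω => t ≤ maxX ω) := by
      rw [htail]; linarith
    have hle := t_mul_prob_le_expMax (p := p) (n := n) (m := m) hp0' hp1 t
    have hhalf : (t:ℝ) * (1/2) ≤ (t:ℝ) * bProb n m p (fun ω => t ≤ maxX ω) :=
      mul_le_mul_of_nonneg_left hprob (Nat.cast_nonneg t)
    linarith [hle, hhalf]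
  set t₁ : ℕ := ⌊2*M⌋₊ + 1 with ht₁def
  have ht₁1 : 1 ≤ t₁ := Nat.le_add_left 1 _
  have hMt₁ : 2*M < (t₁:ℝ) := by
    rw [ht₁def]; push_cast
    exact Nat.lt_floor_add_one (2*M)
  have hnq : (n:ℝ) * q p m t₁ < 1 := by
    by_contra hcon
    push_neg at hcon
    have := lower t₁ ht₁1 hcon
    linarith
  have hnR : (0:ℝ) < (n:ℝ) := by
    have : 0 < n := hn
    exact_mod_cast this
  have hq_le : q p m t₁ ≤ 1/(n:ℝ) := by
    rw [le_div_iff₀ hnR]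
    nlinarith [hnq]
  have hq3 : q p m (3*t₁) ≤ (q p m t₁)^3 := by
    obtain ⟨s, hs⟩ : ∃ s, t₁ = s + 1 := ⟨t₁ - 1, by omega⟩
    have h1 : q p m (s+1 + (t₁ + t₁)) ≤ q p m (s+1) * q p m (t₁ + t₁) :=
      q_submult hp0' hp1 s _
    have h2 : q p m (s+1 + t₁) ≤ q p m (s+1) * q p m t₁ := q_submult hp0' hp1 s t₁
    have he : 3*t₁ = s + 1 + (t₁ + t₁) := by omega
    have he2 : t₁ + t₁ = s + 1 + t₁ := by omega
    calc q p m (3*t₁) = q p m (s+1+(t₁+t₁)) := by rw [he]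
      _ ≤ q p m (s+1) * q p m (t₁+t₁) := h1
      _ ≤ q p m (s+1) * (q p m (s+1) * q p m t₁) := by
          refine mul_le_mul_of_nonneg_left ?_ (hq0 (s+1))
          rw [he2]
          exact h2
      _ = (q p m t₁)^3 := by rw [← hs]; ring
  have hunion : bProb n m p (fun ω => (3*t₁ : ℕ) ≤ maxX ω) ≤ (n:ℝ) * q p m (3*t₁) := by
    have hcongr : bProb n m p (fun ω => (3*t₁:ℕ) ≤ maxX ω)
        = bProb n m p (fun ω => ∃ i, (3*t₁:ℕ) ≤ cnt (ω i)) := by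
      apply bProb_congr
      intro ω
      rw [show maxX ω = univ.sup (Xvar ω) from rfl,
        Finset.le_sup_iff ((by omega : (0:ℕ) < 3*t₁) : (⊥:ℕ) < 3*t₁)]
      constructor
      · rintro ⟨b, _, hb⟩; exact ⟨b, hb⟩
      · rintro ⟨i, hi⟩; exact ⟨i, Finset.mem_univ i, hi⟩
    rw [hcongr]
    exact bProb_union hp0' hp1 (fun a => 3*t₁ ≤ cnt a)
  have hincl : bProb n m p (fun ω => 12 * M ≤ (maxX ω : ℝ))
      ≤ bProb n m p (fun ω => (3*t₁:ℕ) ≤ maxX ω) := by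
    apply bProb_mono hp0' hp1
    intro ω h12
    have hfloor : (⌊2*M⌋₊ : ℝ) ≤ 2*M := Nat.floor_le (by linarith)
    have h3t : ((3*t₁ : ℕ) : ℝ) ≤ 12 * M := by
      rw [ht₁def]
      push_cast
      linarith
    have hc : ((3*t₁:ℕ):ℝ) ≤ (maxX ω : ℝ) := le_trans h3t h12
    exact_mod_cast hc
  have hne : (n:ℝ) ≠ 0 := ne_of_gt hnR
  calc bProb n m p (fun ω => 12 * M ≤ (maxX ω : ℝ))
      ≤ (n:ℝ) * q p m (3*t₁) := le_trans hincl hunion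
    _ ≤ (n:ℝ) * (q p m t₁)^3 := mul_le_mul_of_nonneg_left hq3 (le_of_lt hnR)
    _ ≤ (n:ℝ) * (1/(n:ℝ))^3 := by
        refine mul_le_mul_of_nonneg_left ?_ (le_of_lt hnR)
        exact pow_le_pow_left₀ (hq0 t₁) hq_le 3
    _ = (n:ℝ) ^ (-(2:ℝ)) := by
        rw [Real.rpow_neg (le_of_lt hnR), show ((2:ℝ)) = ((2:ℕ):ℝ) by norm_num,
          Real.rpow_natCast]
        field_simp

end S11

/-- In the asymptotic Bernoulli setting, there exist constants
`c, c̃ > 0` such that for all large `n`,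
`P(max_i X_i ≥ c E[max_i X_i]) ≤ n^{-c̃}` for `n` i.i.d. Binomial(m,p) variables. -/


theorem stmt11 (m : ℕ → ℕ) (p : ℕ → ℝ) (δ : ℝ)
    (hδ : 0 < δ ∧ δ < 1)
    (hp0 : ∀ n, 0 < p n ∧ p n ≤ 1)
    (hm : ∃ c C : ℝ, 0 < c ∧ 0 < C ∧ ∃ N : ℕ, ∀ n ≥ N,
      c * (n : ℝ) ^ c ≤ (m n : ℝ) ∧ (m n : ℝ) ≤ C * (n : ℝ) ^ C)
    (hp : ∃ N : ℕ, ∀ n ≥ N, (n : ℝ) ^ (-δ) ≤ p n ∧ p n ≤ 1 / 2) :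
    ∃ c ct : ℝ, 0 < c ∧ 0 < ct ∧ ∃ N : ℕ, ∀ n ≥ N,
      bProb n (m n) (p n) (fun ω => c * expMax n (m n) (p n) ≤ (maxX ω : ℝ)) ≤
        (n : ℝ) ^ (-ct) := by
  obtain ⟨hδ0, hδ1⟩ := hδ
  obtain ⟨c0, C0, hc0, hC0, N₁, hm'⟩ := hm
  obtain ⟨N₂, hp'⟩ := hp
  have hpos : 0 < 1 + c0 - δ := by linarith
  have htend : Filter.Tendsto (fun k : ℕ => c0 * (k:ℝ) ^ (1 + c0 - δ))
      Filter.atTop Filter.atTop :=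
    ((tendsto_rpow_atTop hpos).const_mul_atTop hc0).comp tendsto_natCast_atTop_atTop
  obtain ⟨N₃, hN₃⟩ := Filter.eventually_atTop.mp (htend.eventually_ge_atTop 1)
  refine ⟨12, 2, by norm_num, by norm_num, max (max N₁ N₂) (max N₃ 1), ?_⟩
  intro n hn
  have hn1 : 1 ≤ n := le_trans (le_trans (le_max_right N₃ 1) (le_max_right _ _)) hn
  have hnN₁ : N₁ ≤ n := le_trans (le_trans (le_max_left N₁ N₂) (le_max_left _ _)) hn
  have hnN₂ : N₂ ≤ n := le_trans (le_trans (le_max_right N₁ N₂) (le_max_left _ _)) hn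
  have hnN₃ : N₃ ≤ n := le_trans (le_trans (le_max_left N₃ 1) (le_max_right _ _)) hn
  have hple := hp' n hnN₂
  have hmle := hm' n hnN₁
  have hnR : (0:ℝ) < (n:ℝ) := by
    have : 0 < n := hn1
    exact_mod_cast this
  have hmnp : 1 ≤ p n * ((m n : ℝ) * (n:ℝ)) := by
    have h1 : (1:ℝ) ≤ c0 * (n:ℝ) ^ (1 + c0 - δ) := hN₃ n hnN₃
    have hrw : c0 * (n:ℝ) ^ (1 + c0 - δ) = ((n:ℝ) ^ (-δ) * (c0 * (n:ℝ) ^ c0)) * (n:ℝ) := by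
      rw [show (1 + c0 - δ) = (-δ) + c0 + 1 by ring, Real.rpow_add hnR, Real.rpow_add hnR,
        Real.rpow_one]
      ring
    have hstep : ((n:ℝ)^(-δ) * (c0 * (n:ℝ)^c0)) ≤ p n * (m n : ℝ) :=
      mul_le_mul hple.1 hmle.1
        (mul_nonneg hc0.le (Real.rpow_nonneg hnR.le _)) (hp0 n).1.le
    calc (1:ℝ) ≤ c0 * (n:ℝ)^(1+c0-δ) := h1
      _ = ((n:ℝ)^(-δ) * (c0 * (n:ℝ)^c0)) * (n:ℝ) := hrw
      _ ≤ (p n * (m n:ℝ)) * (n:ℝ) := mul_le_mul_of_nonneg_right hstep (le_of_lt hnR)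
      _ = p n * ((m n:ℝ) * (n:ℝ)) := by ring
  exact S11.main_bound (hp0 n).1 hple.2 hn1 hmnp
end

section
/- Let a(n), b(n) be positive real sequences and p(n) ∈ (0,1) a sequence such that b(n) → ∞, b(n)/√(a(n)) → 0, p(n) → 0, and there is a constant C > 1 with b(n) ≥ C·a(n)·p(n) for all large n. Then for every ε > 0 and all sufficiently large n, log P( Bin(⌈a(n)⌉, p(n)) = ⌈b(n)⌉ ) ≥ −(1+ε)·( b·log( b/(a·p) ) − b + a·p ). The same lower bound holds with ⌈a(n)⌉ replaced by ⌊a(n)⌋ and ⌈b(n)⌉ by ⌊b(n)⌋. -/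
open Filter

/-- `P(Bin(N, q) = k)` for a Binomial(N, q) random variable. -/
noncomputable def binomP (N : ℕ) (q : ℝ) (k : ℕ) : ℝ :=
  (N.choose k : ℝ) * q ^ k * (1 - q) ^ (N - k)


lemma log_factorial_le : ∀ k : ℕ, 1 ≤ k →
    Real.log (k.factorial) ≤ 1 + Real.log k + k * (Real.log k - 1)
  | 0, h => by omega
  | 1, _ => by norm_num
  | (k+2), _ => by
    have hk1 : 1 ≤ k + 1 := by omega
    have ih := log_factorial_le (k+1) hk1
    have hkpos : (0:ℝ) < (k+1:ℕ) := by positivity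
    have hk2pos : (0:ℝ) < ((k:ℝ)+2) := by positivity
    rw [Nat.factorial_succ, Nat.cast_mul, Real.log_mul (by positivity) (by positivity)]
    -- key: ((k+2)) * (log(k+2) - log(k+1)) ≥ 1
    have hkey : Real.log ((k+1:ℕ):ℝ) - Real.log ((k+2:ℕ):ℝ) ≤ -1/((k:ℝ)+2) := by
      have h1 : Real.log (((k+1:ℕ):ℝ) / ((k+2:ℕ):ℝ)) ≤ ((k+1:ℕ):ℝ)/((k+2:ℕ):ℝ) - 1 :=
        Real.log_le_sub_one_of_pos (by positivity)
      rw [Real.log_div (by positivity) (by positivity)] at h1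
      push_cast at h1 ⊢
      have : ((k:ℝ)+1)/((k:ℝ)+2) - 1 = -1/((k:ℝ)+2) := by field_simp; ring
      linarith [this ▸ h1]
    push_cast at ih hkey ⊢
    have hmul := mul_le_mul_of_nonneg_left hkey (by positivity : (0:ℝ) ≤ (k:ℝ)+2)
    have h2 : ((k:ℝ)+2) * (-1/((k:ℝ)+2)) = -1 := by field_simp
    rw [show ((k:ℝ)+1+1) = (k:ℝ)+2 by ring]
    nlinarith [hmul, h2]

lemma neg_log_one_sub_le {x : ℝ} (h0 : 0 ≤ x) (h2 : x ≤ 1/2) :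
    -Real.log (1 - x) ≤ x + 2*x^2 := by
  have hx1 : 0 < 1 - x := by linarith
  have h1 : Real.log (1/(1-x)) ≤ 1/(1-x) - 1 := Real.log_le_sub_one_of_pos (by positivity)
  rw [Real.log_div one_ne_zero (ne_of_gt hx1), Real.log_one] at h1
  have h3 : 1/(1-x) - 1 = x/(1-x) := by field_simp; ring
  have h4 : x/(1-x) ≤ x + 2*x^2 := by
    rw [div_le_iff₀ hx1]; nlinarith
  linarith

lemma log_mono_aux {C u : ℝ} (h1 : 1 ≤ C) (h : C ≤ u) :
    Real.log C + 1/C ≤ Real.log u + 1/u := by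
  have hC : 0 < C := by linarith
  have hu : 0 < u := by linarith
  have h2 : Real.log (C/u) ≤ C/u - 1 := Real.log_le_sub_one_of_pos (by positivity)
  rw [Real.log_div (ne_of_gt hC) (ne_of_gt hu)] at h2
  have e1 : 1/C - 1/u = (u - C)/(C*u) := by field_simp
  have e2 : (u - C)/(C*u) ≤ (u - C)/u := by
    gcongr
    · nlinarith
  have e3 : (u - C)/u = 1 - C/u := by field_simp
  linarith [e1 ▸ (e2.trans_eq e3)]

lemma log_add_one_le {x c : ℝ} (hx : 1 ≤ x) (hc : 0 ≤ c) (h9 : 9 ≤ c^2 * x) :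
    Real.log (x + 1) ≤ c * x := by
  have hx0 : (0:ℝ) ≤ x := by linarith
  have h1 : Real.log (Real.sqrt (x+1)) ≤ Real.sqrt (x+1) - 1 :=
    Real.log_le_sub_one_of_pos (Real.sqrt_pos.mpr (by linarith))
  rw [Real.log_sqrt (by linarith)] at h1
  have h2 : Real.sqrt (x+1) ≤ Real.sqrt (2*x) := Real.sqrt_le_sqrt (by linarith)
  have h3 : Real.sqrt (2*x) ≤ (3/2) * Real.sqrt x := by
    rw [show (2:ℝ)*x = 2*x from rfl, Real.sqrt_mul (by norm_num) x]
    have : Real.sqrt 2 ≤ 3/2 := by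
      rw [show (3/2:ℝ) = Real.sqrt ((3/2)^2) by rw [Real.sqrt_sq]; norm_num]
      exact Real.sqrt_le_sqrt (by norm_num)
    nlinarith [Real.sqrt_nonneg x, Real.sqrt_nonneg (2:ℝ)]
  have h4 : 3 ≤ c * Real.sqrt x := by
    have hs : Real.sqrt 9 ≤ Real.sqrt (c^2 * x) := Real.sqrt_le_sqrt h9
    rw [show (9:ℝ) = 3^2 by norm_num, Real.sqrt_sq (by norm_num)] at hs
    rw [Real.sqrt_mul (by positivity) x, Real.sqrt_sq hc] at hs
    exact hs
  have h5 : c * Real.sqrt x * Real.sqrt x = c * x := by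
    rw [mul_assoc, Real.mul_self_sqrt hx0]
  nlinarith [Real.sqrt_nonneg x, Real.one_le_sqrt.mpr hx]

set_option maxHeartbeats 1600000 in
lemma key (a b p ε : ℝ) (N k : ℕ)
    (hp : 0 < p) (hp2 : p ≤ 1/2)
    (hb2 : 2 ≤ b) (ha : 0 < a)
    (hN1 : a - 1 ≤ (N:ℝ)) (hN2 : (N:ℝ) ≤ a + 1)
    (hk1 : b - 1 ≤ (k:ℝ)) (hk2 : (k:ℝ) ≤ b + 1)
    (hab : 8 * b^2 ≤ a)
    (hapb : a * p ≤ b)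
    (hε : 0 < ε)
    (hS0 : 0 ≤ b * Real.log (b / (a*p)) - b + a*p)
    (hεb : 4 ≤ ε * b)
    (hlogb : Real.log (b+1) ≤ ε/8 * (b * Real.log (b / (a*p)) - b + a*p))
    (hpe : 2 * b * p ≤ ε/8 * (b * Real.log (b / (a*p)) - b + a*p))
    (hbig : 30 ≤ ε * (b * Real.log (b / (a*p)) - b + a*p)) :
    -((1+ε) * (b * Real.log (b/(a*p)) - b + a*p)) ≤ Real.log (binomP N p k) := by
  set L := Real.log (b/(a*p)) with hLdef
  clear_value L
  have hb0 : (0:ℝ) < b := by linarith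
  have hap : 0 < a * p := mul_pos ha hp
  have hL0 : 0 ≤ L := by
    rw [hLdef]; exact Real.log_nonneg ((one_le_div hap).mpr hapb)
  have hk1' : 1 ≤ k := by exact_mod_cast (by linarith : (1:ℝ) ≤ (k:ℝ))
  have hk0 : (0:ℝ) < k := by exact_mod_cast hk1'
  have habm : (1:ℝ) ≤ a - b - 2 := by nlinarith
  have hkN : k ≤ N := by
    have : (k:ℝ) ≤ (N:ℝ) := by nlinarith
    exact_mod_cast this
  have hch : (0:ℝ) < (N.choose k : ℝ) := by exact_mod_cast Nat.choose_pos hkN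
  have h1p : (0:ℝ) < 1 - p := by linarith
  -- expand log binomP
  have hexp : Real.log (binomP N p k) =
      Real.log (N.choose k : ℝ) + k * Real.log p + ((N:ℝ) - k) * Real.log (1-p) := by
    rw [binomP, Real.log_mul (by positivity) (by positivity),
        Real.log_mul (ne_of_gt hch) (by positivity), Real.log_pow, Real.log_pow,
        Nat.cast_sub hkN]
  -- choose lower bound
  have hchoose : k * Real.log (a - b - 2) - Real.log (k.factorial : ℝ)
      ≤ Real.log (N.choose k : ℝ) := by
    have h1 : ((N + 1 - k : ℕ):ℝ)^k / (k.factorial : ℝ) ≤ (N.choose k : ℝ) :=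
      Nat.pow_le_choose k N
    have hcast : ((N + 1 - k : ℕ):ℝ) = (N:ℝ) + 1 - k := by
      push_cast [Nat.cast_sub (by omega : k ≤ N + 1)]; ring
    have h2 : (a - b - 2)^k ≤ ((N + 1 - k : ℕ):ℝ)^k := by
      apply pow_le_pow_left₀ (by linarith)
      rw [hcast]; linarith
    have h3 : (a - b - 2)^k ≤ (N.choose k : ℝ) * (k.factorial : ℝ) := by
      rw [div_le_iff₀ (by positivity : (0:ℝ) < (k.factorial : ℝ))] at h1
      exact h2.trans h1
    have h4 := Real.log_le_log (by positivity) h3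
    rw [Real.log_pow, Real.log_mul (ne_of_gt hch) (by positivity)] at h4
    linarith
  -- factorial upper bound
  have hlb1 : (0:ℝ) < b + 1 := by linarith
  have hfact : Real.log (k.factorial : ℝ) ≤ 1 + Real.log (b+1) + k * Real.log (b+1) - k := by
    have h1 := log_factorial_le k hk1'
    have h2 : Real.log k ≤ Real.log (b+1) := Real.log_le_log hk0 hk2
    have h3 : (k:ℝ) * (Real.log k - 1) ≤ k * (Real.log (b+1) - 1) := by
      apply mul_le_mul_of_nonneg_left (by linarith) (by positivity)
    nlinarith
  -- (1-p) term
  have h1mp : -((a+1) * (p + 2*p^2)) ≤ ((N:ℝ) - k) * Real.log (1-p) := by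
    have hlg : Real.log (1-p) ≤ 0 := Real.log_nonpos (by linarith) (by linarith)
    have hb1 : -Real.log (1-p) ≤ p + 2*p^2 := neg_log_one_sub_le hp.le hp2
    have h2 : (a+1) * Real.log (1-p) ≤ ((N:ℝ) - k) * Real.log (1-p) :=
      mul_le_mul_of_nonpos_right (by linarith : (N:ℝ) - k ≤ a + 1) hlg
    nlinarith
  -- D bound
  set D := Real.log (b+1) - Real.log (a - b - 2) - Real.log p with hDdef
  clear_value D
  have hD0 : 0 ≤ D := by
    have h1 : Real.log ((a - b - 2) * p) ≤ Real.log (b+1) := by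
      apply Real.log_le_log (by positivity)
      nlinarith
    rw [Real.log_mul (by linarith) (ne_of_gt hp)] at h1
    simp only [hDdef]; linarith
  have hDL : D ≤ L + 1/b + 2 * ((b+2)/a) := by
    have hLsplit : L = Real.log b - Real.log a - Real.log p := by
      rw [hLdef, Real.log_div (ne_of_gt hb0) (ne_of_gt hap),
          Real.log_mul (ne_of_gt ha) (ne_of_gt hp)]; ring
    have t1 : Real.log (b+1) - Real.log b ≤ 1/b := by
      have := Real.log_le_sub_one_of_pos (show (0:ℝ) < (b+1)/b by positivity)
      rw [Real.log_div (ne_of_gt hlb1) (ne_of_gt hb0)] at this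
      have he : (b+1)/b - 1 = 1/b := by field_simp; ring
      linarith [he ▸ this]
    have t2 : Real.log a - Real.log (a - b - 2) ≤ 2 * ((b+2)/a) := by
      set x := (b+2)/a with hx
      have hx0 : 0 ≤ x := by positivity
      have hx2 : x ≤ 1/2 := by
        rw [hx, div_le_iff₀ ha]; nlinarith
      have he : 1 - x = (a - b - 2)/a := by
        rw [hx, eq_div_iff (ne_of_gt ha)]; field_simp; ring
      have := neg_log_one_sub_le hx0 hx2
      rw [he, Real.log_div (by linarith) (ne_of_gt ha)] at this
      nlinarith
    rw [hDdef, hLsplit]; linarith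
  -- k-term bound
  have hkD : -((k:ℝ) * D) ≥ -(b * L + L + 5/2) := by
    have h1 : (k:ℝ) * D ≤ (b+1) * D := mul_le_mul_of_nonneg_right hk2 hD0
    have h2 : (b+1) * D ≤ (b+1) * (L + 1/b + 2*((b+2)/a)) :=
      mul_le_mul_of_nonneg_left hDL (by linarith)
    have h3 : (b+1) * (1/b) ≤ 3/2 := by
      rw [mul_one_div, div_le_iff₀ hb0]; linarith
    have h4 : (b+1) * (2*((b+2)/a)) ≤ 1 := by
      rw [show (b+1) * (2*((b+2)/a)) = (2*(b+1)*(b+2))/a by ring,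
          div_le_one ha]
      nlinarith
    linarith
  -- assemble
  rw [hexp]
  have hmain : Real.log (N.choose k : ℝ) + k * Real.log p + ((N:ℝ) - k) * Real.log (1-p)
      ≥ -(b*L + L + 5/2) + (b - 1) - 1 - Real.log (b+1) - (a+1)*(p + 2*p^2) := by
    have e1 : (k:ℝ) * Real.log (a - b - 2) - Real.log (k.factorial : ℝ) + k * Real.log p
        ≥ -((k:ℝ) * D) + k - 1 - Real.log (b+1) := by
      simp only [hDdef]; linarith [hfact]
    linarith [hchoose, h1mp, e1, hkD, hk1]
  -- final numeric
  have f3 : 2*a*p^2 ≤ ε/8 * (b*L - b + a*p) := by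
    nlinarith [hpe, mul_le_mul_of_nonneg_right hapb (by positivity : (0:ℝ) ≤ 2*p)]
  have f4 : p + 2*p^2 ≤ 1 := by nlinarith
  have f1 : L ≤ 2 + ε/2 * (b*L - b + a*p) := by
    have h1 : 2 * (b*L - b + a*p) ≤ ε/2 * b * (b*L - b + a*p) := by
      linarith [mul_nonneg (by linarith : (0:ℝ) ≤ ε*b - 4) hS0]
    have h2 : b * L ≤ b * (2 + ε/2 * (b*L - b + a*p)) := by
      linarith [mul_nonneg hb0.le hL0, hap.le, h1]
    exact (mul_le_mul_iff_right₀ hb0).mp h2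
  have hfin : L + 9/2 + Real.log (b+1) + p + 2*p^2 + 2*a*p^2 ≤ ε*(b*L - b + a*p) := by
    linarith only [f1, f3, f4, hlogb, hbig]
  linarith only [hmain, hfin]

set_option maxHeartbeats 1000000 in
/-- Lower bound on the binomial probability mass function: if `b → ∞`,
`b/√a → 0`, `p → 0` and `b ≥ C a p` eventually for some `C > 1`, then for every `ε > 0`
and all large `n`,
`log P(Bin(⌈a⌉, p) = ⌈b⌉) ≥ -(1+ε)(b log(b/(ap)) - b + ap)`, and the same holds with
floors in place of ceilings. -/
theorem stmt15 (a b : ℕ → ℝ) (p : ℕ → ℝ)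
    (hab : ∀ n, 0 < a n ∧ 0 < b n)
    (hp01 : ∀ n, 0 < p n ∧ p n < 1)
    (hb : Tendsto b atTop atTop)
    (hba : Tendsto (fun n => b n / Real.sqrt (a n)) atTop (nhds 0))
    (hp : Tendsto p atTop (nhds 0))
    (hC : ∃ C : ℝ, 1 < C ∧ ∃ N : ℕ, ∀ n ≥ N, C * (a n * p n) ≤ b n) :
    ∀ ε : ℝ, 0 < ε → ∃ N : ℕ, ∀ n ≥ N,
      -( (1 + ε) * (b n * Real.log (b n / (a n * p n)) - b n + a n * p n)) ≤
        Real.log (binomP ⌈a n⌉₊ (p n) ⌈b n⌉₊) ∧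
      -( (1 + ε) * (b n * Real.log (b n / (a n * p n)) - b n + a n * p n)) ≤
        Real.log (binomP ⌊a n⌋₊ (p n) ⌊b n⌋₊) := by
  obtain ⟨C, hC1, N₀, hCn⟩ := hC
  intro ε hε
  have hC0 : (0:ℝ) < C := by linarith
  obtain ⟨δ, hδ, hδdef⟩ : ∃ δ : ℝ, 0 < δ ∧ δ = Real.log C - 1 + 1/C := by
    refine ⟨_, ?_, rfl⟩
    have h1C : (1:ℝ)/C < 1 := by rw [div_lt_one hC0]; linarith
    have h := Real.log_lt_sub_one_of_pos (show (0:ℝ) < 1/C by positivity) (ne_of_lt h1C)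
    rw [Real.log_div one_ne_zero (ne_of_gt hC0), Real.log_one] at h
    linarith
  have E1 : ∀ᶠ n in atTop, (2:ℝ) ≤ b n := hb.eventually_ge_atTop 2
  have E2 : ∀ᶠ n in atTop, 4/ε ≤ b n := hb.eventually_ge_atTop _
  have E3 : ∀ᶠ n in atTop, 30/(ε*δ) ≤ b n := hb.eventually_ge_atTop _
  have E4 : ∀ᶠ n in atTop, 9/((ε*δ/8)^2) ≤ b n := hb.eventually_ge_atTop _
  have E5 : ∀ᶠ n in atTop, b n / Real.sqrt (a n) < 1/3 :=
    hba.eventually_lt_const (by norm_num)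
  have E6 : ∀ᶠ n in atTop, p n < 1/2 := hp.eventually_lt_const (by norm_num)
  have E7 : ∀ᶠ n in atTop, p n < ε*δ/16 := hp.eventually_lt_const (by positivity)
  have E8 : ∀ᶠ n in atTop, C * (a n * p n) ≤ b n := eventually_atTop.mpr ⟨N₀, hCn⟩
  have hall := (((((((E1.and E2).and E3).and E4).and E5).and E6).and E7).and E8)
  rw [Filter.eventually_atTop] at hall
  obtain ⟨N, hN⟩ := hall
  refine ⟨N, fun n hn => ?_⟩
  obtain ⟨⟨⟨⟨⟨⟨⟨h2b, h4b⟩, h30b⟩, h9b⟩, hsq⟩, hp12⟩, hpεδ⟩, hCap⟩ := hN n hn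
  obtain ⟨ha0, hb0⟩ := hab n
  obtain ⟨hp0, hp1⟩ := hp01 n
  have hbpos : (0:ℝ) < b n := by linarith
  have hap : 0 < a n * p n := mul_pos ha0 hp0
  have hapb : a n * p n ≤ b n := by
    have h1 : 1 * (a n * p n) ≤ C * (a n * p n) :=
      mul_le_mul_of_nonneg_right hC1.le hap.le
    linarith only [h1, hCap]
  have hεb : 4 ≤ ε * b n := by
    have := (div_le_iff₀ hε).mp h4b; linarith
  have hsqa : (0:ℝ) < Real.sqrt (a n) := Real.sqrt_pos.mpr ha0
  have hab8 : 8 * (b n)^2 ≤ a n := by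
    have h := (div_lt_iff₀ hsqa).mp hsq
    have hbb := mul_lt_mul'' h h hbpos.le hbpos.le
    have hss : Real.sqrt (a n) * Real.sqrt (a n) = a n := Real.mul_self_sqrt ha0.le
    linarith only [hbb, hss, ha0.le]
  -- hS
  have hu : C ≤ b n / (a n * p n) := (le_div_iff₀ hap).mpr hCap
  have hmono := log_mono_aux hC1.le hu
  rw [one_div_div] at hmono
  have hcan : b n * ((a n * p n) / b n) = a n * p n := by field_simp
  have hS : δ * b n ≤ b n * Real.log (b n / (a n * p n)) - b n + a n * p n := by
    have h2 := mul_le_mul_of_nonneg_left hmono hbpos.le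
    rw [hδdef]
    linarith only [h2, hcan]
  have hS0 : 0 ≤ b n * Real.log (b n / (a n * p n)) - b n + a n * p n :=
    le_trans (by positivity) hS
  have hSε := mul_le_mul_of_nonneg_left hS (by positivity : (0:ℝ) ≤ ε/8)
  have hbig : 30 ≤ ε * (b n * Real.log (b n / (a n * p n)) - b n + a n * p n) := by
    have h1 : 30 ≤ ε * δ * b n := by
      have := (div_le_iff₀ (by positivity : (0:ℝ) < ε*δ)).mp h30b; linarith
    linarith only [h1, mul_le_mul_of_nonneg_left hS hε.le]
  have hlogb : Real.log (b n + 1) ≤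
      ε/8 * (b n * Real.log (b n / (a n * p n)) - b n + a n * p n) := by
    have h9 : 9 ≤ (ε*δ/8)^2 * b n := by
      have := (div_le_iff₀ (by positivity : (0:ℝ) < (ε*δ/8)^2)).mp h9b; linarith
    have h1 := log_add_one_le (show (1:ℝ) ≤ b n by linarith) (by positivity) h9
    linarith only [h1, hSε]
  have hpe : 2 * b n * p n ≤
      ε/8 * (b n * Real.log (b n / (a n * p n)) - b n + a n * p n) := by
    have h1 : 2 * p n * b n ≤ (ε*δ/8) * b n :=
      mul_le_mul_of_nonneg_right (by linarith) hbpos.le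
    linarith only [h1, hSε]
  constructor
  · exact key (a n) (b n) (p n) ε _ _ hp0 hp12.le h2b ha0
      (by linarith [Nat.le_ceil (a n)]) (Nat.ceil_lt_add_one ha0.le).le
      (by linarith [Nat.le_ceil (b n)]) (Nat.ceil_lt_add_one hb0.le).le
      hab8 hapb hε hS0 hεb hlogb hpe hbig
  · exact key (a n) (b n) (p n) ε _ _ hp0 hp12.le h2b ha0
      (Nat.sub_one_lt_floor (a n)).le (by linarith [Nat.floor_le ha0.le])
      (Nat.sub_one_lt_floor (b n)).le (by linarith [Nat.floor_le hb0.le])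
      hab8 hapb hε hS0 hεb hlogb hpe hbig
end

section
/- Let a(n), b(n) be positive real sequences and p(n) ∈ (0,1) a sequence such that b(n) → ∞, b(n)/√(a(n)) → 0, p(n) → 0, and b(n)/(a(n)·p(n)) → ∞. Then for every ε > 0 and all sufficiently large n, log P( Bin(⌈a(n)⌉, p(n)) = ⌈b(n)⌉ ) ≥ −(1+ε)·b·log( b/(a·p) ). -/
open Filter

lemma choose_lb : ∀ (K N : ℕ), K ≤ N → ((N : ℝ) / K) ^ K ≤ N.choose K := by
  intro K
  induction K with
  | zero => intro N _; simp
  | succ k ih =>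
    intro N hKN
    obtain ⟨m, rfl⟩ : ∃ m, N = m + 1 := ⟨N - 1, by omega⟩
    have hk : k ≤ m := by omega
    have ihm := ih m hk
    have hrec : ((m + 1).choose (k + 1) : ℝ) = ((m : ℝ) + 1) / ((k : ℝ) + 1) * m.choose k := by
      have h := Nat.add_one_mul_choose_eq m k
      have h' : ((m + 1 : ℕ) : ℝ) * (m.choose k : ℝ) = ((m + 1).choose (k + 1) : ℝ) * ((k + 1 : ℕ) : ℝ) := by
        exact_mod_cast congrArg (Nat.cast : ℕ → ℝ) h
      push_cast at h' ⊢
      field_simp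
      linarith
    have hbase : (((m : ℝ) + 1) / ((k : ℝ) + 1)) ^ k ≤ ((m : ℝ) / k) ^ k := by
      rcases Nat.eq_zero_or_pos k with hk0 | hk0
      · simp [hk0]
      · apply pow_le_pow_left₀ (by positivity)
        rw [div_le_div_iff₀ (by positivity) (by exact_mod_cast hk0)]
        have : (k : ℝ) ≤ m := by exact_mod_cast hk
        nlinarith [this]
    have hpos : (0:ℝ) ≤ ((m : ℝ) + 1) / ((k : ℝ) + 1) := by positivity
    calc (((m+1 : ℕ) : ℝ) / ((k+1 : ℕ) : ℝ)) ^ (k+1)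
        = (((m : ℝ) + 1) / ((k : ℝ) + 1)) * (((m : ℝ) + 1) / ((k : ℝ) + 1)) ^ k := by
          push_cast; ring
      _ ≤ (((m : ℝ) + 1) / ((k : ℝ) + 1)) * ((m : ℝ) / k) ^ k :=
          mul_le_mul_of_nonneg_left hbase hpos
      _ ≤ (((m : ℝ) + 1) / ((k : ℝ) + 1)) * m.choose k :=
          mul_le_mul_of_nonneg_left ihm hpos
      _ = ((m + 1).choose (k + 1) : ℝ) := hrec.symm


/-- If `b → ∞`, `b/√a → 0`, `p → 0` and `b/(ap) → ∞`, then for every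
`ε > 0` and all large `n`, `log P(Bin(⌈a⌉, p) = ⌈b⌉) ≥ -(1+ε) b log(b/(ap))`. -/
theorem stmt16 (a b : ℕ → ℝ) (p : ℕ → ℝ)
    (hab : ∀ n, 0 < a n ∧ 0 < b n)
    (hp01 : ∀ n, 0 < p n ∧ p n < 1)
    (hb : Tendsto b atTop atTop)
    (hba : Tendsto (fun n => b n / Real.sqrt (a n)) atTop (nhds 0))
    (hp : Tendsto p atTop (nhds 0))
    (hbap : Tendsto (fun n => b n / (a n * p n)) atTop atTop) :
    ∀ ε : ℝ, 0 < ε → ∃ N : ℕ, ∀ n ≥ N,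
      -( (1 + ε) * (b n * Real.log (b n / (a n * p n)))) ≤
        Real.log (binomP ⌈a n⌉₊ (p n) ⌈b n⌉₊) := by
  intro ε hε
  have E1 : ∀ᶠ n in atTop, max 1 (6/ε) ≤ b n := hb.eventually_ge_atTop _
  have E2 : ∀ᶠ n in atTop, max (8/ε) (Real.exp 2) ≤ b n / (a n * p n) :=
    hbap.eventually_ge_atTop _
  have E3 : ∀ᶠ n in atTop, p n < 1/2 :=
    hp.eventually (gt_mem_nhds (by norm_num : (0:ℝ) < 1/2))
  have E4 : ∀ᶠ n in atTop, b n / Real.sqrt (a n) < 1 :=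
    hba.eventually (gt_mem_nhds one_pos)
  obtain ⟨N₀, hN₀⟩ := (eventually_atTop.mp ((E1.and E2).and (E3.and E4)))
  refine ⟨N₀, fun n hn => ?_⟩
  obtain ⟨⟨h1, h2⟩, h3, h4⟩ := hN₀ n hn
  obtain ⟨hA, hB⟩ := hab n
  obtain ⟨hQ, hQ1⟩ := hp01 n
  set A := a n with hAdef
  set B := b n with hBdef
  set Q := p n with hQdef
  have hB1 : 1 ≤ B := le_trans (le_max_left _ _) h1
  have hBε : 6/ε ≤ B := le_trans (le_max_right _ _) h1
  have hR8 : 8/ε ≤ B / (A * Q) := le_trans (le_max_left _ _) h2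
  have hRe : Real.exp 2 ≤ B / (A * Q) := le_trans (le_max_right _ _) h2
  have hAQ : 0 < A * Q := mul_pos hA hQ
  -- B ≤ A, A > 1
  have hsqA : 0 < Real.sqrt A := Real.sqrt_pos.mpr hA
  have hBsq : B < Real.sqrt A := by
    have := (div_lt_one hsqA).mp h4
    exact this
  have hA1 : 1 ≤ A := by
    nlinarith [Real.sq_sqrt hA.le, hBsq, hB1, hsqA]
  have hBA : B ≤ A := by nlinarith [Real.sq_sqrt hA.le, hBsq, hB1, hsqA]
  -- ceilings
  set K := ⌈B⌉₊ with hKdef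
  set Nn := ⌈A⌉₊ with hNdef
  have hKN : K ≤ Nn := Nat.ceil_le_ceil hBA
  have hBK : B ≤ (K : ℝ) := Nat.le_ceil B
  have hKB : (K : ℝ) ≤ B + 1 := (Nat.ceil_lt_add_one hB.le).le
  have hAN : A ≤ (Nn : ℝ) := Nat.le_ceil A
  have hNA : (Nn : ℝ) ≤ A + 1 := (Nat.ceil_lt_add_one hA.le).le
  have hKpos : (0:ℝ) < K := lt_of_lt_of_le (by linarith) hBK
  have hNpos : (0:ℝ) < Nn := lt_of_lt_of_le hA hAN
  have hK1 : (1:ℝ) ≤ K := le_trans hB1 hBK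
  have h1Q : 0 < 1 - Q := by linarith
  have hCpos : (0:ℝ) < (Nn.choose K : ℝ) := by exact_mod_cast Nat.choose_pos hKN
  have rNK : ((Nn - K : ℕ) : ℝ) = (Nn : ℝ) - (K : ℝ) := by
    rw [Nat.cast_sub hKN]
  -- log expansion
  have hlog : Real.log (binomP Nn Q K) =
      Real.log (Nn.choose K) + (K : ℝ) * Real.log Q
        + ((Nn : ℝ) - (K : ℝ)) * Real.log (1 - Q) := by
    unfold binomP
    rw [Real.log_mul (mul_pos hCpos (pow_pos hQ K)).ne' (pow_pos h1Q _).ne',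
      Real.log_mul hCpos.ne' (pow_pos hQ K).ne', Real.log_pow, Real.log_pow, rNK]
  -- choose lower bound
  have hCh : (K : ℝ) * (Real.log Nn - Real.log K) ≤ Real.log (Nn.choose K) := by
    have h1' := choose_lb K Nn hKN
    have := Real.log_le_log (pow_pos (div_pos hNpos hKpos) K) h1'
    rwa [Real.log_pow, Real.log_div hNpos.ne' hKpos.ne'] at this
  set L := Real.log (B / (A * Q)) with hLdef
  have hL2 : 2 ≤ L := by
    rw [hLdef, Real.le_log_iff_exp_le (by positivity)]
    exact hRe
  have hLsplit : L = Real.log B - Real.log A - Real.log Q := by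
    rw [hLdef, Real.log_div hB.ne' hAQ.ne', Real.log_mul hA.ne' hQ.ne']
    ring
  have hεB : 6 ≤ ε * B := by
    have := mul_le_mul_of_nonneg_left hBε hε.le
    calc (6:ℝ) = ε * (6/ε) := by field_simp
      _ ≤ ε * B := this
  have h8' : 8 * (A * Q) ≤ ε * B := by
    have h8 : 8/ε * (A * Q) ≤ B := (le_div_iff₀ hAQ).mp hR8
    have := mul_le_mul_of_nonneg_left h8 hε.le
    calc 8 * (A * Q) = ε * (8/ε * (A * Q)) := by field_simp
      _ ≤ ε * B := this
  -- Claim 1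
  have hlogB1 : Real.log (B + 1) ≤ Real.log B + 1/B := by
    have h := Real.log_le_sub_one_of_pos (show (0:ℝ) < (B+1)/B by positivity)
    rw [Real.log_div (by linarith) hB.ne'] at h
    have hq : (B+1)/B = 1 + 1/B := by field_simp
    rw [hq] at h
    linarith
  have hBinv : 1/B ≤ 1 := by
    rw [div_le_one hB]; exact hB1
  have claim1 : (K : ℝ) * (Real.log K - Real.log Nn - Real.log Q)
      ≤ (1 + ε/2) * (B * L) := by
    have hXY : Real.log K - Real.log Nn - Real.log Q
        ≤ Real.log (B+1) - Real.log A - Real.log Q := by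
      have e1 : Real.log K ≤ Real.log (B+1) := Real.log_le_log hKpos hKB
      have e2 : Real.log A ≤ Real.log Nn := Real.log_le_log hA hAN
      linarith
    have hYpos : 0 ≤ Real.log (B+1) - Real.log A - Real.log Q := by
      have : Real.log B ≤ Real.log (B+1) := Real.log_le_log hB (by linarith)
      linarith [hLsplit ▸ hL2]
    have step1 : (K : ℝ) * (Real.log K - Real.log Nn - Real.log Q)
        ≤ (B + 1) * (Real.log (B+1) - Real.log A - Real.log Q) :=
      le_trans (mul_le_mul_of_nonneg_left hXY hKpos.le)
        (mul_le_mul_of_nonneg_right hKB hYpos)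
    have step2 : (B + 1) * (Real.log (B+1) - Real.log A - Real.log Q)
        ≤ (B + 1) * (L + 1/B) := by
      apply mul_le_mul_of_nonneg_left _ (by linarith)
      rw [hLsplit]; linarith
    have step3 : (B + 1) * (L + 1/B) ≤ (1 + ε/2) * (B * L) := by
      have hLpos : (0:ℝ) ≤ L := by linarith
      have t : 0 ≤ (ε * B - 6) * L := mul_nonneg (by linarith) hLpos
      have hBB : B * (1/B) = 1 := by field_simp
      linarith [t, hBB, hBinv, hL2]
    linarith
  -- Claim 2
  have hlog1Q : -(2 * Q) ≤ Real.log (1 - Q) := by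
    have h := Real.log_le_sub_one_of_pos (show (0:ℝ) < (1-Q)⁻¹ by positivity)
    rw [Real.log_inv] at h
    have hinv : (1 - Q)⁻¹ ≤ 2 := by
      rw [inv_le_comm₀ h1Q (by norm_num)]
      linarith
    have he : (1 - Q)⁻¹ - 1 = Q * (1 - Q)⁻¹ := by field_simp; ring
    have hm : Q * (1 - Q)⁻¹ ≤ Q * 2 := mul_le_mul_of_nonneg_left hinv hQ.le
    linarith
  have hlog1Qneg : Real.log (1 - Q) ≤ 0 :=
    Real.log_nonpos (by linarith) (by linarith)
  have claim2 : -((ε/2) * (B * L)) ≤ ((Nn : ℝ) - (K : ℝ)) * Real.log (1 - Q) := by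
    have hNKA : (Nn : ℝ) - (K : ℝ) ≤ A := by linarith
    have s1 : A * Real.log (1 - Q) ≤ ((Nn : ℝ) - (K : ℝ)) * Real.log (1 - Q) :=
      mul_le_mul_of_nonpos_right hNKA hlog1Qneg
    have s2 : A * (-(2 * Q)) ≤ A * Real.log (1 - Q) :=
      mul_le_mul_of_nonneg_left hlog1Q hA.le
    have s3 : -((ε/2) * (B * L)) ≤ A * (-(2 * Q)) := by
      have t1 : (0:ℝ) ≤ ε * B * (L - 2) :=
        mul_nonneg (mul_nonneg hε.le hB.le) (by linarith)
      linarith [t1, h8', hAQ.le]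
    linarith
  rw [hlog]
  linarith [hCh, claim1, claim2]
end
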